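/- Let S be a binary refinement operator with locality range M_S. Then for every k ∈ ℕ, the k-fold composition S^k is local with locality range 2M_S; that is, S^k(𝒫)_{2^k j + r} for r ∈ {0,…,2^k−1} is independent of 𝒫_ℓ whenever ℓ < j − 2M_S or ℓ > j + 2M_S. -/

import Mathlib

/-- a binary refinement operator with locality range `M` has all its powers
local with the uniform locality range `2M`. -/
theorem locality_of_powers {Ω : Type*} (S : (ℤ → Ω) → (ℤ → Ω)) (M : ℕ)
    (hloc : ∀ (P Q : ℤ → Ω) (j : ℤ),
      (∀ ℓ : ℤ, j - M ≤ ℓ → ℓ ≤ j + M → P ℓ = Q ℓ) →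
      S P (2*j) = S Q (2*j) ∧ S P (2*j+1) = S Q (2*j+1)) :
    ∀ (k : ℕ) (P Q : ℤ → Ω) (j : ℤ) (r : ℕ), r < 2^k →
      (∀ ℓ : ℤ, j - 2*M ≤ ℓ → ℓ ≤ j + 2*M → P ℓ = Q ℓ) →
      S^[k] P (2^k * j + r) = S^[k] Q (2^k * j + r) := by
  intro k
  induction k with
  | zero =>
    intro P Q j r hr h
    interval_cases r
    simpa using h j (by omega) (by omega)
  | succ k IH =>
    intro P Q j r hr h
    set q : ℕ := r / 2^k with hqdef
    set r0 : ℕ := r % 2^k with hr0def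
    have hpow : 0 < 2^k := Nat.pow_pos (by norm_num)
    have hr0 : r0 < 2^k := Nat.mod_lt _ hpow
    have hq1 : q ≤ 1 := by
      have : r < 2^k * 2 := by
        have : (2:ℕ)^(k+1) = 2^k * 2 := by ring
        omega
      have := Nat.div_lt_of_lt_mul (by omega : r < 2^k * 2)
      omega
    have hrsum : 2^k * q + r0 = r := Nat.div_add_mod r (2^k)
    have hsplit : (2:ℤ)^(k+1) * j + (r:ℤ) = 2^k * (2*j + (q:ℤ)) + (r0:ℤ) := by
      have : ((2:ℤ)^k * (q:ℤ) + (r0:ℤ)) = (r:ℤ) := by exact_mod_cast congrArg (Nat.cast : ℕ → ℤ) hrsum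
      rw [← this]; ring
    rw [Function.iterate_succ_apply, Function.iterate_succ_apply, hsplit]
    apply IH (S P) (S Q) (2*j + (q:ℤ)) r0 hr0
    intro m hm1 hm2
    have hdm : 2 * (m / 2) + m % 2 = m := by omega
    have hs : m % 2 = 0 ∨ m % 2 = 1 := by omega
    set L : ℤ := m / 2 with hL
    have hq1' : (q:ℤ) ≤ 1 := by exact_mod_cast hq1
    have hq0' : (0:ℤ) ≤ (q:ℤ) := Int.ofNat_nonneg q
    have key : ∀ ℓ' : ℤ, L - M ≤ ℓ' → ℓ' ≤ L + M → P ℓ' = Q ℓ' := by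
      intro ℓ' h1 h2
      exact h ℓ' (by omega) (by omega)
    rcases hs with h0 | h1
    · have := (hloc P Q L key).1
      rwa [show 2*L = m by omega] at this
    · have := (hloc P Q L key).2
      rwa [show 2*L + 1 = m by omega] at this
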